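/- Let k₁ > 0 and k₂ ≠ 0 be constants and let f : I → (0, k₁) be a differentiable function on an interval I. Define g(r) = k₂/√(f(r)(k₁ − f(r))) and v(r) = −2k₁/g(r)², and suppose f satisfies f'(r) = f(r)(f(r) − k₁)/g(r)². Then the triple (f, g, v) satisfies the steady Laplace soliton ODE system: f' = f(g²v + 2f)/(2g²), g' = −(g²v + 4f)/(4g), and v' = v(g²v + 4f)/(2g²). Moreover g²v is identically −2k₁ and g²·f·(f − k₁) is identically −k₂². -/

import Mathlib

/-- Let `k₁ > 0`, `k₂ ≠ 0`, and let `f : I → (0, k₁)` be differentiable with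
`f' = f(f - k₁)/g²`, where `g = k₂/√(f(k₁ - f))` and `v = -2k₁/g²`.  Then `(f, g, v)`
satisfies the steady Laplace soliton ODE system `f' = f(g²v + 2f)/(2g²)`,
`g' = -(g²v + 4f)/(4g)`, `v' = v(g²v + 4f)/(2g²)`, and moreover `g²v ≡ -2k₁` and
`g²·f·(f - k₁) ≡ -k₂²`. -/
theorem soliton_ode_system (k₁ k₂ : ℝ) (hk₁ : 0 < k₁) (hk₂ : k₂ ≠ 0)
    (I : Set ℝ) (hI : Convex ℝ I) (f g v : ℝ → ℝ)
    (hf : ∀ r ∈ I, 0 < f r ∧ f r < k₁)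
    (hg : ∀ r, g r = k₂ / Real.sqrt (f r * (k₁ - f r)))
    (hv : ∀ r, v r = -2 * k₁ / (g r) ^ 2)
    (hf' : ∀ r ∈ I, HasDerivWithinAt f (f r * (f r - k₁) / (g r) ^ 2) I r) :
    ∀ r ∈ I,
      HasDerivWithinAt f (f r * ((g r) ^ 2 * v r + 2 * f r) / (2 * (g r) ^ 2)) I r ∧
      HasDerivWithinAt g (-(((g r) ^ 2 * v r + 4 * f r) / (4 * g r))) I r ∧
      HasDerivWithinAt v (v r * ((g r) ^ 2 * v r + 4 * f r) / (2 * (g r) ^ 2)) I r ∧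
      (g r) ^ 2 * v r = -2 * k₁ ∧
      (g r) ^ 2 * (f r * (f r - k₁)) = -(k₂ ^ 2) := by
  intro r hr
  obtain ⟨hf0, hf1⟩ := hf r hr
  have hu : 0 < f r * (k₁ - f r) := mul_pos hf0 (by linarith)
  set s : ℝ := Real.sqrt (f r * (k₁ - f r)) with hs_def
  have hs : 0 < s := Real.sqrt_pos.2 hu
  have hss : s ^ 2 = f r * (k₁ - f r) := Real.sq_sqrt hu.le
  have hgr : g r = k₂ / s := hg r
  have hgne : g r ≠ 0 := by rw [hgr]; exact div_ne_zero hk₂ hs.ne'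
  have hg2 : g r ^ 2 = k₂ ^ 2 / (f r * (k₁ - f r)) := by
    rw [hgr, div_pow, hss]
  have hsg : s * g r = k₂ := by rw [hgr]; field_simp
  have hg2v : g r ^ 2 * v r = -2 * k₁ := by
    rw [hv]; field_simp
  have hg2f : g r ^ 2 * (f r * (f r - k₁)) = -(k₂ ^ 2) := by
    have h2 : k₁ - f r ≠ 0 := by linarith
    rw [hg2]; field_simp; ring
  -- derivative of u = f(k₁ - f)
  have hU : HasDerivWithinAt (fun x => f x * (k₁ - f x))
      (f r * (f r - k₁) / (g r) ^ 2 * (k₁ - 2 * f r)) I r := by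
    have h := (hf' r hr).mul ((hf' r hr).const_sub k₁)
    refine h.congr_deriv ?_; ring
  -- derivative of s = sqrt u
  have hS : HasDerivWithinAt (fun x => Real.sqrt (f x * (k₁ - f x)))
      (1 / (2 * s) * (f r * (f r - k₁) / (g r) ^ 2 * (k₁ - 2 * f r))) I r :=
    (Real.hasDerivAt_sqrt hu.ne').comp_hasDerivWithinAt r hU
  -- derivative of g = k₂ / s
  have hG : HasDerivWithinAt g (-(((g r) ^ 2 * v r + 4 * f r) / (4 * g r))) I r := by
    have h := (hasDerivWithinAt_const r I k₂).div hS hs.ne'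
    have hgfun : g = fun x => k₂ / Real.sqrt (f x * (k₁ - f x)) := funext hg
    simp only [Pi.div_def] at h
    rw [← hgfun] at h
    refine h.congr_deriv ?_; symm
    rw [hv, ← hs_def, ← hsg]
    have h1 : f r ≠ 0 := hf0.ne'
    have h2 : k₁ - f r ≠ 0 := by linarith
    field_simp
    linear_combination (4 * k₁ - 8 * f r) * hss
  refine ⟨?_, hG, ?_, hg2v, hg2f⟩
  · convert hf' r hr using 1
    rw [hv]; field_simp; ring
  · have hvfun : v = fun x => -2 * k₁ / (g x) ^ 2 := funext hv
    have h := (hasDerivWithinAt_const r I (-2 * k₁)).div (hG.pow 2) (pow_ne_zero 2 hgne)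
    simp only [Pi.div_def, Pi.pow_apply] at h
    rw [← hvfun] at h
    refine h.congr_deriv ?_; symm
    rw [hv]
    field_simp
    ring
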